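/- Let G be a connected finite simple graph and (H, f) a valued cover of G with f(v,1) + f(v,2) + ⋯ + f(v,κ) ≥ deg_G(v) for every vertex v ∈ V(G). If there exists a vertex w ∈ V(G) with f(w,1) + f(w,2) + ⋯ + f(w,κ) > deg_G(w), then H has a strictly f-degenerate transversal. -/

import Mathlib

open SimpleGraph

universe u

/-- `H` is a cover of `G` with `κ` parts: every edge of `H` joins distinct fibres
`X_u`, `X_v` with `uv ∈ E(G)` (in particular each fibre is independent), and the
edges between two fibres form a (possibly empty) matching. -/
def IsCover {V : Type u} (κ : ℕ) (G : SimpleGraph V) (H : SimpleGraph (V × Fin κ)) : Prop :=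
  (∀ (u v : V) (p q : Fin κ), H.Adj (u, p) (v, q) → G.Adj u v) ∧
  (∀ (u v : V) (p q q' : Fin κ), H.Adj (u, p) (v, q) → H.Adj (u, p) (v, q') → q = q')

/-- The subgraph of `Γ` induced on `R` is strictly `f`-degenerate: every nonempty
subgraph with vertices inside `R` has a vertex whose degree there is `< f`. -/
def StrictlyFDegenerateOn {α : Type u} (Γ : SimpleGraph α) (f : α → ℕ) (R : Set α) : Prop :=
  ∀ S : Set α, S ⊆ R → S.Nonempty → ∃ x ∈ S, (S ∩ {y | Γ.Adj x y}).ncard < f x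

/-- `R` is a transversal of a cover with fibres `X_v = {v} × Fin κ`. -/
def IsTransversal {V : Type u} {κ : ℕ} (R : Set (V × Fin κ)) : Prop :=
  ∀ v : V, ∃! p : Fin κ, (v, p) ∈ R

/-- `H` has a strictly `f`-degenerate transversal. -/
def HasSFDTransversal {V : Type u} {κ : ℕ} (H : SimpleGraph (V × Fin κ))
    (f : V × Fin κ → ℕ) : Prop :=
  ∃ R : Set (V × Fin κ), IsTransversal R ∧ StrictlyFDegenerateOn H f R

open scoped Classical


section Aux

variable {V : Type u} {κ : ℕ}

/-- pick a colour for `v` with few conflicts against the already chosen list `S`. -/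
noncomputable def pickColor (H : SimpleGraph (V × Fin κ)) (f : V × Fin κ → ℕ)
    (hκ : 0 < κ) (v : V) (S : List (V × Fin κ)) : Fin κ :=
  if h : ∃ p, S.countP (fun x => decide (H.Adj (v, p) x)) < f (v, p) then h.choose
  else ⟨0, hκ⟩

noncomputable def greedy (H : SimpleGraph (V × Fin κ)) (f : V × Fin κ → ℕ)
    (hκ : 0 < κ) : List V → List (V × Fin κ)
  | [] => []
  | v :: rest => (v, pickColor H f hκ v (greedy H f hκ rest)) :: greedy H f hκ rest

variable {G : SimpleGraph V} {H : SimpleGraph (V × Fin κ)} {f : V × Fin κ → ℕ} {hκ : 0 < κ}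

lemma greedy_map_fst : ∀ L : List V, (greedy H f hκ L).map Prod.fst = L
  | [] => rfl
  | v :: rest => by simp [greedy, greedy_map_fst rest]

lemma greedy_append (A B : List V) :
    ∃ C : List (V × Fin κ), greedy H f hκ (A ++ B) = C ++ greedy H f hκ B ∧
      C.map Prod.fst = A := by
  induction A with
  | nil => exact ⟨[], rfl, rfl⟩
  | cons a A ih =>
    obtain ⟨C, hC, hCm⟩ := ih
    exact ⟨(a, pickColor H f hκ a (greedy H f hκ (A ++ B))) :: C,
      by simp [greedy, hC], by simp [hCm]⟩

/-- Each chosen pair conflicts with at most one colour of `v`. -/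
lemma sum_conflicts_le (hH : IsCover κ G H) (v : V) (S : List (V × Fin κ)) :
    ∑ p : Fin κ, S.countP (fun x => decide (H.Adj (v, p) x)) ≤
      S.countP (fun x => decide (G.Adj v x.1)) := by
  induction S with
  | nil => simp
  | cons x S ih =>
    simp only [List.countP_cons]
    rw [Finset.sum_add_distrib]
    refine Nat.add_le_add ih ?_
    have key : ∑ p : Fin κ, (if decide (H.Adj (v, p) x) = true then 1 else 0) ≤
        (if decide (G.Adj v x.1) = true then 1 else 0) := by
      simp only [decide_eq_true_eq]
      rw [← Finset.card_filter]
      by_cases hadj : ∃ p : Fin κ, H.Adj (v, p) x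
      · obtain ⟨p0, hp0⟩ := hadj
        have hg : G.Adj v x.1 := hH.1 v x.1 p0 x.2 (by exact hp0)
        rw [if_pos hg]
        apply Finset.card_le_one.2
        intro a ha b hb
        simp only [Finset.mem_filter] at ha hb
        exact hH.2 x.1 v x.2 a b (ha.2.symm) (hb.2.symm)
      · push_neg at hadj
        simp [Finset.filter_eq_empty_iff.2 (fun p _ => hadj p)]
    exact key

lemma exists_color (hH : IsCover κ G H) (v : V) (S : List (V × Fin κ))
    (hcard : S.countP (fun x => decide (G.Adj v x.1)) < ∑ p : Fin κ, f (v, p)) :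
    ∃ p, S.countP (fun x => decide (H.Adj (v, p) x)) < f (v, p) := by
  by_contra hc
  push_neg at hc
  have := Finset.sum_le_sum (fun p (_ : p ∈ Finset.univ) => hc p)
  exact absurd (le_trans this (sum_conflicts_le hH v S)) (by omega)

lemma pick_spec (hH : IsCover κ G H) (v : V) (S : List (V × Fin κ))
    (hcard : S.countP (fun x => decide (G.Adj v x.1)) < ∑ p : Fin κ, f (v, p)) :
    S.countP (fun x => decide (H.Adj (v, pickColor H f hκ v S) x)) <
      f (v, pickColor H f hκ v S) := by
  have h := exists_color hH v S hcard
  rw [pickColor, dif_pos h]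
  exact h.choose_spec

end Aux

section Order
variable {V : Type u} {G : SimpleGraph V}

lemma frontier_exists {S : Set V} {a b : V} (p : G.Walk a b) (ha : a ∈ S) (hb : b ∉ S) :
    ∃ u ∈ S, ∃ v, v ∉ S ∧ G.Adj u v := by
  induction p with
  | nil => exact absurd ha hb
  | @cons a c b h q ih =>
    by_cases hc : c ∈ S
    · exact ih hc hb
    · exact ⟨a, ha, c, hc, h⟩

/-- good order: every non-initial vertex has an earlier neighbour. -/
def GoodOrder (G : SimpleGraph V) (L : List V) : Prop :=
  ∀ i (hi : i < L.length), 0 < i → ∃ j, ∃ hj : j < L.length, j < i ∧ G.Adj L[j] L[i]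

lemma goodOrder_extend {L : List V} (hL : GoodOrder G L) {u x : V} (hu : u ∈ L)
    (hadj : G.Adj u x) : GoodOrder G (L ++ [x]) := by
  intro i hi hi0
  rcases lt_or_ge i L.length with h | h
  · obtain ⟨j, hj, hji, hadj'⟩ := hL i h hi0
    refine ⟨j, by simp; omega, hji, ?_⟩
    rwa [List.getElem_append_left hj, List.getElem_append_left h]
  · have hix : i = L.length := by simp at hi; omega
    obtain ⟨j, hj, hju⟩ := List.mem_iff_getElem.1 hu
    refine ⟨j, by simp; omega, by omega, ?_⟩
    rw [List.getElem_append_left hj, hju,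
      List.getElem_append_right (by omega)]
    simp [hix]
    exact hadj

lemma exists_goodOrder [Fintype V] (hG : G.Connected) (w : V) :
    ∃ L : List V, L.Nodup ∧ (∀ v, v ∈ L) ∧ L.head? = some w ∧ GoodOrder G L := by
  suffices h : ∀ n (L : List V), L.Nodup → L.head? = some w → GoodOrder G L →
      Fintype.card V ≤ L.length + n →
      ∃ M : List V, M.Nodup ∧ (∀ v, v ∈ M) ∧ M.head? = some w ∧ GoodOrder G M by
    refine h (Fintype.card V) [w] (by simp) rfl ?_ (by simp)
    intro i hi hi0; simp at hi; omega
  intro n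
  induction n with
  | zero =>
    intro L hnd hhead hgood hcard
    refine ⟨L, hnd, fun v => ?_, hhead, hgood⟩
    simp only [Nat.add_zero] at hcard
    have h1 : L.toFinset.card = L.length := List.toFinset_card_of_nodup hnd
    have h2 : L.toFinset = Finset.univ :=
      Finset.eq_univ_of_card _ (le_antisymm (Finset.card_le_univ _) (by omega))
    rw [← List.mem_toFinset, h2]
    exact Finset.mem_univ v
  | succ n ih =>
    intro L hnd hhead hgood hcard
    by_cases hall : ∀ v, v ∈ L
    · exact ⟨L, hnd, hall, hhead, hgood⟩
    · push_neg at hall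
      obtain ⟨v0, hv0⟩ := hall
      have hwL : w ∈ L := by
        cases L with
        | nil => simp at hhead
        | cons a L => simp at hhead; simp [hhead]
      obtain ⟨p⟩ := hG.preconnected w v0
      obtain ⟨u, hu, x, hx, hadj⟩ := frontier_exists (S := {v | v ∈ L}) p hwL hv0
      refine ih (L ++ [x]) ?_ ?_ (goodOrder_extend hgood hu hadj) (by simp; omega)
      · simp [List.nodup_append, hnd]; exact fun a ha h => hx (h ▸ ha)
      · cases L with
        | nil => simp at hhead
        | cons a L => simpa using hhead
end Order

section More
variable {V : Type u} {G : SimpleGraph V}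


lemma goodOrder_decomp {L A B : List V} {v : V} (hL : GoodOrder G L)
    (h : L = A ++ v :: B) (hA : A ≠ []) : ∃ u ∈ A, G.Adj u v := by
  subst h
  have hlen : A.length < (A ++ v :: B).length := by simp
  have hv : (A ++ v :: B)[A.length] = v := by
    rw [List.getElem_append_right (le_refl _)]
    simp
  have hA0 : 0 < A.length := List.length_pos_iff.2 hA
  obtain ⟨j, hj, hji, hadj⟩ := hL A.length hlen hA0
  have hjA : j < A.length := hji
  rw [hv, List.getElem_append_left hjA] at hadj
  exact ⟨A[j], List.getElem_mem _, hadj⟩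

lemma exists_earliest {κ : ℕ} (L : List V) (S : Set (V × Fin κ)) (hne : S.Nonempty)
    (hsub : ∀ y ∈ S, y.1 ∈ L) :
    ∃ A v B, L = A ++ v :: B ∧ (∃ p, (v, p) ∈ S) ∧ ∀ y ∈ S, y.1 ∉ A := by
  induction L with
  | nil =>
    obtain ⟨y, hy⟩ := hne
    exact absurd (hsub y hy) List.not_mem_nil
  | cons a L ih =>
    by_cases ha : ∃ p, (a, p) ∈ S
    · exact ⟨[], a, L, rfl, ha, by simp⟩
    · push_neg at ha
      have hsub' : ∀ y ∈ S, y.1 ∈ L := by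
        intro y hy
        rcases List.mem_cons.1 (hsub y hy) with h | h
        · exact absurd (show (a, y.2) ∈ S by rw [← h]; exact hy) (ha y.2)
        · exact h
      obtain ⟨A, v, B, hL, hv, hA⟩ := ih hsub'
      refine ⟨a :: A, v, B, by rw [hL]; rfl, hv, ?_⟩
      intro y hy
      simp only [List.mem_cons, not_or]
      refine ⟨fun h => ha y.2 (by rw [← h]; exact hy), hA y hy⟩

lemma ncard_neighborSet_eq [Fintype V] (v : V) :
    (G.neighborSet v).ncard = (G.neighborFinset v).card := by
  rw [Set.ncard_eq_toFinset_card']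
  congr 1

lemma countP_nbhd_le [Fintype V] (v : V) (B : List V) (hB : B.Nodup) :
    B.countP (fun u => decide (G.Adj v u)) ≤ (G.neighborSet v).ncard := by
  rw [List.countP_eq_length_filter, ncard_neighborSet_eq,
    ← List.toFinset_card_of_nodup (hB.filter _)]
  apply Finset.card_le_card
  intro y hy
  simp only [List.mem_toFinset, List.mem_filter, decide_eq_true_eq] at hy
  simpa using hy.2

lemma countP_nbhd_lt [Fintype V] {v u : V} (B : List V) (hB : B.Nodup)
    (hu : G.Adj u v) (huB : u ∉ B) :
    B.countP (fun u' => decide (G.Adj v u')) < (G.neighborSet v).ncard := by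
  rw [List.countP_eq_length_filter, ncard_neighborSet_eq,
    ← List.toFinset_card_of_nodup (hB.filter _)]
  have hsub : (B.filter (fun u' => decide (G.Adj v u'))).toFinset ⊆
      G.neighborFinset v \ {u} := by
    intro y hy
    simp only [List.mem_toFinset, List.mem_filter, decide_eq_true_eq] at hy
    simp only [Finset.mem_sdiff, Finset.mem_singleton, mem_neighborFinset]
    exact ⟨hy.2, fun h => huB (h ▸ hy.1)⟩
  have humem : u ∈ G.neighborFinset v := by simpa using hu.symm
  calc (B.filter (fun u' => decide (G.Adj v u'))).toFinset.card
      ≤ (G.neighborFinset v \ {u}).card := Finset.card_le_card hsub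
    _ = (G.neighborFinset v).card - 1 := by
        rw [Finset.card_sdiff_of_subset (by simpa using humem)]; simp
    _ < (G.neighborFinset v).card := by
        have : 0 < (G.neighborFinset v).card := Finset.card_pos.2 ⟨u, humem⟩
        omega
end More
theorem hasSFDTransversal_of_exists_gt
    {V : Type} [Fintype V] (G : SimpleGraph V) (hG : G.Connected) (κ : ℕ)
    (H : SimpleGraph (V × Fin κ)) (hH : IsCover κ G H) (f : V × Fin κ → ℕ)
    (hf : ∀ v : V, (G.neighborSet v).ncard ≤ ∑ q : Fin κ, f (v, q))
    (w : V) (hw : (G.neighborSet w).ncard < ∑ q : Fin κ, f (w, q)) :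
    HasSFDTransversal H f := by
  -- κ is positive
  have hκ : 0 < κ := by
    rcases Nat.eq_zero_or_pos κ with h | h
    · subst h; simp at hw
    · exact h
  obtain ⟨L, hnd, hall, hhead, hgood⟩ := exists_goodOrder hG w
  -- the crucial counting estimate for every decomposition of `L`
  have hcount : ∀ A v B, L = A ++ v :: B →
      B.countP (fun u => decide (G.Adj v u)) < ∑ p : Fin κ, f (v, p) := by
    intro A v B hdec
    have hndB : B.Nodup := ((hdec ▸ hnd).of_append_right).of_cons
    by_cases hA : A = []
    · subst hA
      have hvw : v = w := by
        rw [hdec] at hhead; simpa using hhead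
      subst hvw
      exact lt_of_le_of_lt (countP_nbhd_le v B hndB) hw
    · obtain ⟨u, hu, hadj⟩ := goodOrder_decomp hgood hdec hA
      have huB : u ∉ B := by
        have hd := (List.nodup_append'.mp (hdec ▸ hnd)).2.2
        intro hc
        exact hd hu (List.mem_cons_of_mem _ hc)
      exact lt_of_lt_of_le (countP_nbhd_lt B hndB hadj huB) (hf v)
  refine ⟨{x | x ∈ greedy H f hκ L}, ?_, ?_⟩
  · -- transversal
    intro v
    have hv : v ∈ (greedy H f hκ L).map Prod.fst := by
      rw [greedy_map_fst]; exact hall v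
    obtain ⟨y, hy, hy1⟩ := List.mem_map.1 hv
    refine ⟨y.2, by simpa [← hy1] using hy, ?_⟩
    intro p hp
    have hmapnd : ((greedy H f hκ L).map Prod.fst).Nodup := by
      rw [greedy_map_fst]; exact hnd
    have heq := List.inj_on_of_nodup_map hmapnd hp hy (by simp [hy1])
    have h2 : ((v, p) : V × Fin κ).2 = y.2 := by rw [heq]
    simpa using h2
  · -- strictly f-degenerate
    intro S hSR hSne
    have hfstL : ∀ y ∈ S, y.1 ∈ L := by
      intro y hy
      have : y ∈ greedy H f hκ L := hSR hy
      rw [← greedy_map_fst (H := H) (f := f) (hκ := hκ) L]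
      exact List.mem_map_of_mem this
    obtain ⟨A, v, B, hdec, ⟨p, hpS⟩, hAS⟩ := exists_earliest L S hSne hfstL
    obtain ⟨C, hC, hCm⟩ := greedy_append (H := H) (f := f) (hκ := hκ) A (v :: B)
    set pc := pickColor H f hκ v (greedy H f hκ B) with hpc
    have hgr : greedy H f hκ L = C ++ (v, pc) :: greedy H f hκ B := by
      rw [hdec, hC]; rfl
    have hvB : v ∉ B := (List.nodup_cons.mp ((hdec ▸ hnd).of_append_right)).1
    have hvA : v ∉ A := by
      have hd := (List.nodup_append'.mp (hdec ▸ hnd)).2.2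
      exact fun hc => hd hc (List.mem_cons_self)
    have hxS : (v, pc) ∈ S := by
      have hmem : (v, p) ∈ greedy H f hκ L := hSR hpS
      rw [hgr] at hmem
      rcases List.mem_append.1 hmem with h | h
      · exact absurd (hCm ▸ List.mem_map_of_mem (f := Prod.fst) h) hvA
      · rcases List.mem_cons.1 h with h | h
        · exact h ▸ hpS
        · exfalso
          apply hvB
          have hm := List.mem_map_of_mem (f := Prod.fst) h
          rwa [greedy_map_fst] at hm
    refine ⟨(v, pc), hxS, ?_⟩
    have hcard' : (greedy H f hκ B).countP (fun x => decide (G.Adj v x.1)) <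
        ∑ q : Fin κ, f (v, q) := by
      have heq : (greedy H f hκ B).countP (fun x => decide (G.Adj v x.1)) =
          B.countP (fun u => decide (G.Adj v u)) := by
        conv_rhs => rw [← greedy_map_fst (H := H) (f := f) (hκ := hκ) B]
        rw [List.countP_map]; rfl
      rw [heq]; exact hcount A v B hdec
    have hspec := pick_spec (hκ := hκ) hH v (greedy H f hκ B) hcard'
    rw [← hpc] at hspec
    have hsub : S ∩ {y | H.Adj (v, pc) y} ⊆
        ↑((greedy H f hκ B).filter (fun y => decide (H.Adj (v, pc) y))).toFinset := by
      intro y hy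
      obtain ⟨hyS, hyadj⟩ := hy
      have hmem : y ∈ greedy H f hκ L := hSR hyS
      rw [hgr] at hmem
      simp only [Finset.coe_insert, Set.mem_setOf_eq] at hyadj
      simp only [Finset.mem_coe, List.mem_toFinset, List.mem_filter, decide_eq_true_eq]
      rcases List.mem_append.1 hmem with h | h
      · exact absurd (hCm ▸ List.mem_map_of_mem (f := Prod.fst) h) (hAS y hyS)
      · rcases List.mem_cons.1 h with h | h
        · exfalso; rw [h] at hyadj; exact H.irrefl hyadj
        · exact ⟨h, hyadj⟩
    calc (S ∩ {y | H.Adj (v, pc) y}).ncard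
        ≤ ((greedy H f hκ B).filter (fun y => decide (H.Adj (v, pc) y))).toFinset.card := by
          rw [← Set.ncard_coe_finset]
          exact Set.ncard_le_ncard hsub (Finset.finite_toSet _)
      _ ≤ ((greedy H f hκ B).filter (fun y => decide (H.Adj (v, pc) y))).length :=
          List.toFinset_card_le _
      _ = (greedy H f hκ B).countP (fun y => decide (H.Adj (v, pc) y)) :=
          List.countP_eq_length_filter.symm
      _ < f (v, pc) := hspec
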